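/- Running intersection separates labels: in a project-join tree constructed so that π(a) ⊆ χ(O(a)) for a mapping O into a tree decomposition (S, χ) of the Gaifman graph, if distinct internal nodes a, b satisfied x ∈ π(a) ∩ π(b), then x would lie in the bag of some node on the path between O(a) and O(b) in S that is a parent of O(a) or O(b); combined with π(a) ∩ χ(parent(O(a))) = ∅ this yields a contradiction, so the sets π(a) are pairwise disjoint. -/

import Mathlib

/-- A tree whose nodes carry bags of vertices (a candidate tree decomposition). -/
inductive BTree (α : Type*) where
  | node (bag : Finset α) (children : List (BTree α))

/-- The subtree at a position (a path of child indices). -/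
def BTree.subAt {α : Type*} : BTree α → List ℕ → Option (BTree α)
  | t, [] => some t
  | .node _ cs, i :: p =>
    match h : cs[i]? with
    | some c => BTree.subAt c p
    | none => none
termination_by t _ => sizeOf t
decreasing_by
  obtain ⟨hi, rfl⟩ := List.getElem?_eq_some_iff.mp h
  have := List.sizeOf_lt_of_mem (List.getElem_mem hi)
  simp only [BTree.node.sizeOf_spec]
  omega

/-- The bag of the root of a tree. -/
def BTree.rootBag {α : Type*} : BTree α → Finset α
  | .node b _ => b

/-- The bag at a position, if the position is valid. -/
def BTree.bagAt {α : Type*} (t : BTree α) (p : List ℕ) : Option (Finset α) :=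
  (t.subAt p).map BTree.rootBag

/-- Running intersection (connectivity) property: for every vertex `x`, the
positions whose bags contain `x` form a connected subtree: there is a top
position such that every position containing `x` lies below it and all
positions in between also contain `x`. -/
def BTree.Connected {α : Type*} (t : BTree α) : Prop :=
  ∀ x : α, (∃ p b, t.bagAt p = some b ∧ x ∈ b) →
    ∃ top : List ℕ, ∀ p b, t.bagAt p = some b → x ∈ b →
      top <+: p ∧ ∀ m, top <+: m → m <+: p → ∃ b', t.bagAt m = some b' ∧ x ∈ b'

/-- Running intersection separates labels: if `S` is a tree decomposition
(satisfying the running intersection property) and each internal node `a` of a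
project-join tree is mapped to a distinct decomposition node `O(a)` with
`π(a) ⊆ χ(O(a))` and, whenever `O(a)` is not the root,
`π(a) ∩ χ(parent(O(a))) = ∅`, then the sets `π(a)` are pairwise disjoint. -/

lemma prefix_dropLast_of_ne {l₁ l₂ : List ℕ} (h : l₁ <+: l₂) (hne : l₁ ≠ l₂) :
    l₁ <+: l₂.dropLast := by
  obtain ⟨t, rfl⟩ := h
  have ht : t ≠ [] := by rintro rfl; simp at hne
  rw [List.dropLast_append_of_ne_nil ht]
  exact ⟨t.dropLast, rfl⟩

theorem labels_pairwise_disjoint {V : Type*} [DecidableEq V] {ι : Type*}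
    (S : BTree V) (hconn : S.Connected)
    (π : ι → Finset V) (O : ι → List ℕ)
    (hvalid : ∀ a : ι, (S.subAt (O a)).isSome)
    (hinj : Function.Injective O)
    (hsub : ∀ (a : ι) (b : Finset V), S.bagAt (O a) = some b → π a ⊆ b)
    (hparent : ∀ (a : ι), O a ≠ [] →
      ∀ b : Finset V, S.bagAt (O a).dropLast = some b → Disjoint (π a) b) :
    ∀ a b : ι, a ≠ b → Disjoint (π a) (π b) := by
  intro a b hab
  rw [Finset.disjoint_left]
  intro x hxa hxb
  have hOab : O a ≠ O b := fun h => hab (hinj h)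
  obtain ⟨ta, hta⟩ := Option.isSome_iff_exists.mp (hvalid a)
  obtain ⟨tb, htb⟩ := Option.isSome_iff_exists.mp (hvalid b)
  have hba : S.bagAt (O a) = some ta.rootBag := by simp [BTree.bagAt, hta]
  have hbb : S.bagAt (O b) = some tb.rootBag := by simp [BTree.bagAt, htb]
  have hxa' : x ∈ ta.rootBag := hsub a _ hba hxa
  have hxb' : x ∈ tb.rootBag := hsub b _ hbb hxb
  obtain ⟨top, htop⟩ := hconn x ⟨O a, _, hba, hxa'⟩
  obtain ⟨hpa, hma⟩ := htop (O a) _ hba hxa'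
  obtain ⟨hpb, hmb⟩ := htop (O b) _ hbb hxb'
  -- WLOG: one of O a, O b is ≠ top
  have key : ∀ c : ι, x ∈ π c → top <+: O c →
      (∀ m, top <+: m → m <+: O c → ∃ b', S.bagAt m = some b' ∧ x ∈ b') →
      O c ≠ top → False := by
    intro c hxc hpc hmc hnetop
    have hne : O c ≠ [] := by
      rintro h
      rw [h] at hpc
      exact hnetop (h.trans (List.prefix_nil.mp hpc).symm)
    obtain ⟨b', hb', hxb'⟩ := hmc (O c).dropLast
      (prefix_dropLast_of_ne hpc (Ne.symm hnetop)) (List.dropLast_prefix _)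
    exact (Finset.disjoint_left.mp (hparent c hne _ hb')) hxc hxb'
  by_cases h : O a = top
  · exact key b hxb hpb hmb (fun e => hOab (h.trans e.symm))
  · exact key a hxa hpa hma h
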